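/- Let n ≥ 1, let L_1, …, L_n be real numbers, and let α ∈ (0,1). Let F̂_n(y) = (1/n)·#{i : L_i ≤ y}, let v̂ = L_{(⌈nα⌉)} be the ⌈nα⌉-th smallest of the L_i, and let S_n = #{i : L_i = v̂}. Then for every v ∈ ℝ, |F̂_n(v̂) − F̂_n(v)| ≤ S_n/n + |F̂_n(v) − α|. -/

import Mathlib

/-- For real numbers `L_1, …, L_n` with empirical CDF `F̂_n(y) = #{i : L_i ≤ y}/n`,
`v̂ = L_{(⌈nα⌉)}` the `⌈nα⌉`-th smallest value, and `S_n = #{i : L_i = v̂}`,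
one has `|F̂_n(v̂) − F̂_n(v)| ≤ S_n/n + |F̂_n(v) − α|` for every `v ∈ ℝ`. -/
theorem stmt_3 (n : ℕ) (hn : 1 ≤ n) (L : Fin n → ℝ) (α : ℝ) (hα : α ∈ Set.Ioo (0:ℝ) 1)
    (k : Fin n) (hk : (k : ℕ) = ⌈(n : ℝ) * α⌉₊ - 1)
    (vhat : ℝ) (hvhat : vhat = L (Tuple.sort L k))
    (S : ℕ) (hS : S = (Finset.univ.filter (fun i => L i = vhat)).card)
    (Fhat : ℝ → ℝ)
    (hF : ∀ y : ℝ, Fhat y = ((Finset.univ.filter (fun i => L i ≤ y)).card : ℝ) / n) :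
    ∀ v : ℝ, |Fhat vhat - Fhat v| ≤ (S : ℝ) / n + |Fhat v - α| := by
  intro v
  set σ := Tuple.sort L with hσ
  have hmono : Monotone (L ∘ σ) := Tuple.monotone_sort L
  set m := ⌈(n : ℝ) * α⌉₊ with hm
  have hnpos : (0:ℝ) < n := by exact_mod_cast hn
  have hxpos : (0:ℝ) < (n:ℝ) * α := mul_pos hnpos hα.1
  have hm1 : 1 ≤ m := Nat.one_le_ceil_iff.mpr hxpos
  have hk1 : (k : ℕ) + 1 = m := by omega
  set c := (Finset.univ.filter (fun i => L i ≤ vhat)).card with hc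
  set c' := (Finset.univ.filter (fun i => L i < vhat)).card with hc'
  -- c ≥ m
  have hsub1 : (Finset.Iic k).image σ ⊆ Finset.univ.filter (fun i => L i ≤ vhat) := by
    intro i hi
    simp only [Finset.mem_image, Finset.mem_Iic] at hi
    obtain ⟨j, hj, rfl⟩ := hi
    simp only [Finset.mem_filter, Finset.mem_univ, true_and]
    rw [hvhat]
    exact hmono hj
  have hcard1 : m ≤ c := by
    have h := Finset.card_le_card hsub1
    rwa [Finset.card_image_of_injective _ (Equiv.injective σ), Fin.card_Iic, hk1] at h
  -- c' ≤ k
  have hsub2 : Finset.univ.filter (fun i => L i < vhat) ⊆ (Finset.Iio k).image σ := by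
    intro i hi
    simp only [Finset.mem_filter, Finset.mem_univ, true_and] at hi
    obtain ⟨j, rfl⟩ := σ.surjective i
    refine Finset.mem_image.mpr ⟨j, ?_, rfl⟩
    simp only [Finset.mem_Iio]
    by_contra h
    push_neg at h
    have := hmono h
    rw [hvhat] at hi
    exact absurd this (not_le.mpr hi)
  have hcard2 : c' ≤ (k : ℕ) := by
    have h := Finset.card_le_card hsub2
    rwa [Finset.card_image_of_injective _ (Equiv.injective σ), Fin.card_Iio] at h
  -- c = c' + S
  have hsplit : c = c' + S := by
    rw [hc, hc', hS]
    rw [← Finset.card_union_of_disjoint (by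
      rw [Finset.disjoint_left]
      intro a ha hb
      simp only [Finset.mem_filter, Finset.mem_univ, true_and] at ha hb
      exact absurd hb (ne_of_lt ha))]
    congr 1
    ext i
    simp only [Finset.mem_filter, Finset.mem_univ, true_and, Finset.mem_union]
    exact le_iff_lt_or_eq
  -- key bound : |Fhat vhat - α| ≤ S / n
  have hle : (n:ℝ) * α ≤ m := Nat.le_ceil _
  have hlt : (m : ℝ) < (n:ℝ) * α + 1 := Nat.ceil_lt_add_one hxpos.le
  have hkc : ((k:ℕ) : ℝ) < (n:ℝ) * α := by
    have : ((k:ℕ) : ℝ) = (m : ℝ) - 1 := by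
      rw [← hk1]; push_cast; ring
    linarith
  have hkey : |Fhat vhat - α| ≤ (S : ℝ) / n := by
    rw [hF vhat, ← hc]
    rw [abs_le]
    constructor
    · have hmc : (m : ℝ) ≤ c := by exact_mod_cast hcard1
      have h1 : α ≤ (c:ℝ)/n := by rw [le_div_iff₀ hnpos]; nlinarith
      have h2 : (0:ℝ) ≤ (S:ℝ)/n := by positivity
      linarith
    · have hcc : (c : ℝ) ≤ ((k:ℕ) : ℝ) + S := by
        exact_mod_cast (hsplit ▸ Nat.add_le_add_right hcard2 S)
      rw [div_sub' (ne_of_gt hnpos), div_le_div_iff₀ hnpos hnpos]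
      nlinarith
  calc |Fhat vhat - Fhat v| ≤ |Fhat vhat - α| + |α - Fhat v| := abs_sub_le _ _ _
    _ ≤ (S : ℝ) / n + |Fhat v - α| := by rw [abs_sub_comm α]; linarith
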